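/- Let X₁,...,Xₙ be i.i.d. in [0,1] with mean μ_v, Y₁,...,Yₙ i.i.d. in [0,1] with mean μ_c, all independent, with μ_v > μ_c and μ_c > 0, and δ = (μ_v−μ_c)/2. Then FB := E[(∑Xᵢ − ∑Yⱼ)·1{∑Xᵢ ≥ ∑Yⱼ}] ≤ n·(μ_v − μ_c + exp(−nδ²/(3μ_v)) + exp(−nδ²/(3μ_c))). Since the always-trade mechanism achieves GFT exactly n(μ_v − μ_c), its GFT is at least (1 − e^{−Ω(n)})·FB. -/

import Mathlib

open MeasureTheory ProbabilityTheory Filter Finset Real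

section AuxStmt8

variable {Ω : Type*} [MeasureSpace Ω] [IsProbabilityMeasure (ℙ : Measure Ω)]

lemma aux_integrable8 {f : Ω → ℝ} (hf : Measurable f) {C : ℝ}
    (h : ∀ᵐ ω ∂ℙ, |f ω| ≤ C) : Integrable f ℙ :=
  (integrable_const C).mono' hf.aestronglyMeasurable h

lemma aux_sum_mem8 {n : ℕ} {f : ℕ → ℝ} (h : ∀ i, f i ∈ Set.Icc (0:ℝ) 1) :
    (∑ i ∈ Finset.range n, f i) ∈ Set.Icc (0:ℝ) (n:ℝ) := by
  constructor
  · exact Finset.sum_nonneg fun i _ => (h i).1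
  · calc (∑ i ∈ Finset.range n, f i) ≤ ∑ _i ∈ Finset.range n, (1:ℝ) :=
        Finset.sum_le_sum fun i _ => (h i).2
      _ = n := by simp

lemma aux_exp_bound8 {f : Ω → ℝ} (hf : Measurable f)
    (hr : ∀ᵐ ω ∂ℙ, f ω ∈ Set.Icc (0:ℝ) 1) (s : ℝ) :
    (∫ ω, Real.exp (s * f ω)) ≤ Real.exp ((∫ ω, f ω) * (Real.exp s - 1)) := by
  have hfint : Integrable f ℙ :=
    aux_integrable8 hf (hr.mono fun ω h => abs_le.2 ⟨by linarith [h.1], h.2⟩)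
  have h1 : (∫ ω, Real.exp (s * f ω)) ≤ ∫ ω, (1 + f ω * (Real.exp s - 1)) := by
    refine integral_mono_ae ?_ ?_ ?_
    · refine aux_integrable8 ((hf.const_mul s).exp) (C := Real.exp |s|)
        (hr.mono fun ω h => ?_)
      rw [abs_of_pos (Real.exp_pos _), Real.exp_le_exp]
      calc s * f ω ≤ |s * f ω| := le_abs_self _
        _ = |s| * |f ω| := abs_mul _ _
        _ ≤ |s| * 1 := by
            apply mul_le_mul_of_nonneg_left _ (abs_nonneg s)
            rw [abs_le]; exact ⟨by linarith [h.1], h.2⟩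
        _ = |s| := mul_one _
    · exact (integrable_const 1).add (hfint.mul_const _)
    · filter_upwards [hr] with ω h
      have hw1 : (0:ℝ) ≤ 1 - f ω := by linarith [h.2]
      have := convexOn_exp.2 (Set.mem_univ (0:ℝ)) (Set.mem_univ s) hw1 h.1 (by ring)
      simp only [smul_eq_mul, mul_zero, zero_add, Real.exp_zero, mul_one] at this
      calc Real.exp (s * f ω) = Real.exp (f ω * s) := by rw [mul_comm]
        _ ≤ (1 - f ω) + f ω * Real.exp s := this
        _ = 1 + f ω * (Real.exp s - 1) := by ring
  have h2 : (∫ ω, (1 + f ω * (Real.exp s - 1))) = 1 + (∫ ω, f ω) * (Real.exp s - 1) := by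
    rw [integral_add (integrable_const 1) (hfint.mul_const _), integral_const,
      integral_mul_const]
    simp
  rw [h2] at h1
  calc (∫ ω, Real.exp (s * f ω)) ≤ 1 + (∫ ω, f ω) * (Real.exp s - 1) := h1
    _ ≤ Real.exp ((∫ ω, f ω) * (Real.exp s - 1)) := by
        rw [add_comm]; exact Real.add_one_le_exp _

lemma aux_chernoff8 (X Y : ℕ → Ω → ℝ) (hX : ∀ i, Measurable (X i)) (hY : ∀ j, Measurable (Y j))
    (hindep : iIndepFun (Sum.elim X Y) ℙ)
    (hXrange : ∀ i, ∀ᵐ ω ∂ℙ, X i ω ∈ Set.Icc (0:ℝ) 1)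
    (hYrange : ∀ j, ∀ᵐ ω ∂ℙ, Y j ω ∈ Set.Icc (0:ℝ) 1)
    {μv μc : ℝ} (hμv : ∀ i, (∫ ω, X i ω) = μv) (hμc : ∀ j, (∫ ω, Y j ω) = μc)
    (hlt : μc < μv) (hpos : 0 < μc) (n : ℕ) :
    (ℙ {ω | 0 ≤ (∑ j ∈ Finset.range n, Y j ω) - ∑ i ∈ Finset.range n, X i ω}).toReal
      ≤ Real.exp (-(n:ℝ) * (Real.sqrt μv - Real.sqrt μc)^2) := by
  have hμvpos : 0 < μv := hpos.trans hlt
  set a := Real.sqrt μv with ha_def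
  set b := Real.sqrt μc with hb_def
  have ha : 0 < a := Real.sqrt_pos.2 hμvpos
  have hb : 0 < b := Real.sqrt_pos.2 hpos
  have ha2 : a ^ 2 = μv := Real.sq_sqrt hμvpos.le
  have hb2 : b ^ 2 = μc := Real.sq_sqrt hpos.le
  have hba : b < a := Real.sqrt_lt_sqrt hpos.le hlt
  set t := Real.log (a / b) with ht_def
  have ht : 0 < t := Real.log_pos (by rw [lt_div_iff₀ hb]; linarith)
  have het : Real.exp t = a / b := Real.exp_log (div_pos ha hb)
  have hent : Real.exp (-t) = b / a := by rw [Real.exp_neg, het, inv_div]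
  set W : ℕ ⊕ ℕ → Ω → ℝ := Sum.elim (fun i ω => -(X i ω)) Y with hW_def
  have hWindep : iIndepFun W ℙ := by
    have h := hindep.comp (Sum.elim (fun _ => fun x : ℝ => -x) (fun _ => id))
      (by rintro (i | j); exacts [measurable_neg, measurable_id])
    convert h using 1
    funext k; cases k <;> rfl
  have hWmeas : ∀ k, Measurable (W k) := by rintro (i | j); exacts [(hX i).neg, hY j]
  set S : Ω → ℝ := fun ω => (∑ j ∈ Finset.range n, Y j ω) - ∑ i ∈ Finset.range n, X i ω
    with hS_def
  have hSsum : S = ∑ k ∈ (Finset.range n).disjSum (Finset.range n), W k := by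
    funext ω
    rw [Finset.sum_apply, Finset.sum_disjSum]
    simp only [hW_def, Sum.elim_inl, Sum.elim_inr, Finset.sum_neg_distrib]
    ring
  have hSmeas : Measurable S :=
    (Finset.measurable_sum _ fun j _ => hY j).sub (Finset.measurable_sum _ fun i _ => hX i)
  have hSbdd : ∀ᵐ ω ∂ℙ, |S ω| ≤ (n:ℝ) := by
    filter_upwards [ae_all_iff.2 hXrange, ae_all_iff.2 hYrange] with ω hx hy
    have h1 := aux_sum_mem8 (n := n) hx
    have h2 := aux_sum_mem8 (n := n) hy
    rw [abs_le]
    exact ⟨by simp only [hS_def]; linarith [h1.2, h2.1],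
           by simp only [hS_def]; linarith [h1.1, h2.2]⟩
  have hint : Integrable (fun ω => Real.exp (t * S ω)) ℙ := by
    refine aux_integrable8 (hSmeas.const_mul t).exp (C := Real.exp (t * n))
      (hSbdd.mono fun ω h => ?_)
    rw [abs_of_pos (Real.exp_pos _), Real.exp_le_exp]
    exact mul_le_mul_of_nonneg_left ((le_abs_self _).trans h) ht.le
  have hbX : ∀ i ∈ Finset.range n,
      mgf (W (Sum.inl i)) ℙ t ≤ Real.exp (μv * (Real.exp (-t) - 1)) := by
    intro i _
    have heq : mgf (W (Sum.inl i)) ℙ t = ∫ ω, Real.exp ((-t) * X i ω) := by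
      simp only [mgf, hW_def, Sum.elim_inl]
      congr 1; funext ω; ring_nf
    rw [heq]
    have h := aux_exp_bound8 (hX i) (hXrange i) (-t)
    rwa [hμv i] at h
  have hbY : ∀ j ∈ Finset.range n,
      mgf (W (Sum.inr j)) ℙ t ≤ Real.exp (μc * (Real.exp t - 1)) := by
    intro j _
    have heq : mgf (W (Sum.inr j)) ℙ t = ∫ ω, Real.exp (t * Y j ω) := rfl
    rw [heq]
    have h := aux_exp_bound8 (hY j) (hYrange j) t
    rwa [hμc j] at h
  have hmgfS : mgf S ℙ t ≤ Real.exp (-(n:ℝ) * (a - b)^2) := by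
    rw [hSsum, hWindep.mgf_sum hWmeas, Finset.prod_disjSum]
    have h1 : (∏ i ∈ Finset.range n, mgf (W (Sum.inl i)) ℙ t)
        ≤ Real.exp (μv * (Real.exp (-t) - 1)) ^ n := by
      calc (∏ i ∈ Finset.range n, mgf (W (Sum.inl i)) ℙ t)
          ≤ ∏ _i ∈ Finset.range n, Real.exp (μv * (Real.exp (-t) - 1)) :=
            Finset.prod_le_prod (fun i _ => mgf_nonneg) hbX
        _ = Real.exp (μv * (Real.exp (-t) - 1)) ^ n := by
            rw [Finset.prod_const, Finset.card_range]
    have h2 : (∏ j ∈ Finset.range n, mgf (W (Sum.inr j)) ℙ t)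
        ≤ Real.exp (μc * (Real.exp t - 1)) ^ n := by
      calc (∏ j ∈ Finset.range n, mgf (W (Sum.inr j)) ℙ t)
          ≤ ∏ _j ∈ Finset.range n, Real.exp (μc * (Real.exp t - 1)) :=
            Finset.prod_le_prod (fun j _ => mgf_nonneg) hbY
        _ = Real.exp (μc * (Real.exp t - 1)) ^ n := by
            rw [Finset.prod_const, Finset.card_range]
    have hkey : μv * (Real.exp (-t) - 1) + μc * (Real.exp t - 1) = -((a - b)^2) := by
      rw [hent, het, ← ha2, ← hb2]
      field_simp
      ring
    calc (∏ i ∈ Finset.range n, mgf (W (Sum.inl i)) ℙ t) *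
          ∏ j ∈ Finset.range n, mgf (W (Sum.inr j)) ℙ t
        ≤ Real.exp (μv * (Real.exp (-t) - 1)) ^ n * Real.exp (μc * (Real.exp t - 1)) ^ n := by
          exact mul_le_mul h1 h2 (Finset.prod_nonneg fun j _ => mgf_nonneg)
            (pow_nonneg (Real.exp_pos _).le _)
      _ = Real.exp (-(n:ℝ) * (a - b)^2) := by
          rw [← Real.exp_nat_mul, ← Real.exp_nat_mul, ← Real.exp_add, ← mul_add, hkey]
          ring_nf
  calc (ℙ {ω | 0 ≤ S ω}).toReal ≤ Real.exp (-t * 0) * mgf S ℙ t :=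
        measure_ge_le_exp_mul_mgf 0 ht.le hint
    _ = mgf S ℙ t := by simp
    _ ≤ Real.exp (-(n:ℝ) * (a - b)^2) := hmgfS

lemma aux_key8 {μv μc δ : ℝ} (hlt : μc < μv) (hpos : 0 < μc) (hδ : δ = (μv - μc) / 2) :
    δ^2 / (3 * μv) ≤ (Real.sqrt μv - Real.sqrt μc)^2 := by
  have hμvpos : 0 < μv := hpos.trans hlt
  set a := Real.sqrt μv
  set b := Real.sqrt μc
  have ha : 0 < a := Real.sqrt_pos.2 hμvpos
  have hb : 0 < b := Real.sqrt_pos.2 hpos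
  have ha2 : a ^ 2 = μv := Real.sq_sqrt hμvpos.le
  have hb2 : b ^ 2 = μc := Real.sq_sqrt hpos.le
  have hba : b < a := Real.sqrt_lt_sqrt hpos.le hlt
  rw [div_le_iff₀ (by positivity)]
  subst hδ
  rw [← ha2, ← hb2]
  nlinarith [sq_nonneg (a - b), sq_nonneg (a + b), mul_pos ha hb,
    mul_nonneg (sq_nonneg (a - b)) (mul_pos ha hb).le]

end AuxStmt8

/-- Efficiency of the always-trade mechanism: the first best is at most
`n(μ_v − μ_c + e^{−nδ²/(3μ_v)} + e^{−nδ²/(3μ_c)})`, so the always-trade GFT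
`n(μ_v − μ_c)` is at least `(1 − e^{−Ω(n)})·FB`. -/
theorem stmt_8 {Ω : Type*} [MeasureSpace Ω] [IsProbabilityMeasure (ℙ : Measure Ω)]
    (X Y : ℕ → Ω → ℝ) (hX : ∀ i, Measurable (X i)) (hY : ∀ j, Measurable (Y j))
    (hindep : iIndepFun (Sum.elim X Y) ℙ)
    (hXid : ∀ i j, IdentDistrib (X i) (X j) ℙ ℙ)
    (hYid : ∀ i j, IdentDistrib (Y i) (Y j) ℙ ℙ)
    (hXrange : ∀ i, ∀ᵐ ω ∂ℙ, X i ω ∈ Set.Icc (0:ℝ) 1)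
    (hYrange : ∀ j, ∀ᵐ ω ∂ℙ, Y j ω ∈ Set.Icc (0:ℝ) 1)
    (μv μc δ : ℝ) (hμv : ∀ i, (∫ ω, X i ω) = μv) (hμc : ∀ j, (∫ ω, Y j ω) = μc)
    (hlt : μc < μv) (hpos : 0 < μc) (hδ : δ = (μv - μc) / 2) :
    (∀ n : ℕ,
      (∫ ω, ((∑ i ∈ Finset.range n, X i ω) - ∑ j ∈ Finset.range n, Y j ω) *
        (if (∑ j ∈ Finset.range n, Y j ω) ≤ ∑ i ∈ Finset.range n, X i ω then 1 else 0))
      ≤ n * (μv - μc + Real.exp (-(n * δ ^ 2) / (3 * μv))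
                     + Real.exp (-(n * δ ^ 2) / (3 * μc))))
    ∧ (∃ C c : ℝ, 0 < c ∧ ∀ n : ℕ,
        (1 - C * Real.exp (-c * n)) *
          (∫ ω, ((∑ i ∈ Finset.range n, X i ω) - ∑ j ∈ Finset.range n, Y j ω) *
            (if (∑ j ∈ Finset.range n, Y j ω) ≤ ∑ i ∈ Finset.range n, X i ω then 1 else 0))
        ≤ n * (μv - μc)) := by
  have hμvpos : 0 < μv := hpos.trans hlt
  have hδpos : 0 < δ := by rw [hδ]; linarith
  have hXint : ∀ i, Integrable (X i) ℙ := fun i =>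
    aux_integrable8 (hX i) ((hXrange i).mono fun ω h => abs_le.2 ⟨by linarith [h.1], h.2⟩)
  have hYint : ∀ j, Integrable (Y j) ℙ := fun j =>
    aux_integrable8 (hY j) ((hYrange j).mono fun ω h => abs_le.2 ⟨by linarith [h.1], h.2⟩)
  -- main estimates on the first best, for every n
  have hFB : ∀ n : ℕ,
      (n:ℝ) * (μv - μc) ≤
        (∫ ω, ((∑ i ∈ Finset.range n, X i ω) - ∑ j ∈ Finset.range n, Y j ω) *
          (if (∑ j ∈ Finset.range n, Y j ω) ≤ ∑ i ∈ Finset.range n, X i ω then 1 else 0)) ∧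
      (∫ ω, ((∑ i ∈ Finset.range n, X i ω) - ∑ j ∈ Finset.range n, Y j ω) *
          (if (∑ j ∈ Finset.range n, Y j ω) ≤ ∑ i ∈ Finset.range n, X i ω then 1 else 0))
        ≤ (n:ℝ) * (μv - μc) + (n:ℝ) * Real.exp (-((n:ℝ) * δ ^ 2) / (3 * μv)) ∧
      (0:ℝ) ≤
        (∫ ω, ((∑ i ∈ Finset.range n, X i ω) - ∑ j ∈ Finset.range n, Y j ω) *
          (if (∑ j ∈ Finset.range n, Y j ω) ≤ ∑ i ∈ Finset.range n, X i ω then 1 else 0)) := by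
    intro n
    set Z : Ω → ℝ := fun ω => (∑ i ∈ Finset.range n, X i ω) - ∑ j ∈ Finset.range n, Y j ω
      with hZ_def
    set f : Ω → ℝ := fun ω => Z ω *
      (if (∑ j ∈ Finset.range n, Y j ω) ≤ ∑ i ∈ Finset.range n, X i ω then 1 else 0) with hf_def
    have hZmeas : Measurable Z :=
      (Finset.measurable_sum _ fun i _ => hX i).sub (Finset.measurable_sum _ fun j _ => hY j)
    have hset : MeasurableSet {ω : Ω |
        (∑ j ∈ Finset.range n, Y j ω) ≤ ∑ i ∈ Finset.range n, X i ω} :=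
      measurableSet_le (Finset.measurable_sum _ fun j _ => hY j)
        (Finset.measurable_sum _ fun i _ => hX i)
    have hfmeas : Measurable f :=
      hZmeas.mul (Measurable.ite hset measurable_const measurable_const)
    have hbdd : ∀ᵐ ω ∂ℙ,
        (∑ i ∈ Finset.range n, X i ω) ∈ Set.Icc (0:ℝ) (n:ℝ) ∧
        (∑ j ∈ Finset.range n, Y j ω) ∈ Set.Icc (0:ℝ) (n:ℝ) := by
      filter_upwards [ae_all_iff.2 hXrange, ae_all_iff.2 hYrange] with ω hx hy
      exact ⟨aux_sum_mem8 hx, aux_sum_mem8 hy⟩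
    have hZbdd : ∀ᵐ ω ∂ℙ, |Z ω| ≤ (n:ℝ) := by
      filter_upwards [hbdd] with ω h
      rw [abs_le]
      constructor
      · simp only [hZ_def]; linarith [h.1.1, h.2.2]
      · simp only [hZ_def]; linarith [h.1.2, h.2.1]
    have hZint : Integrable Z ℙ := aux_integrable8 hZmeas hZbdd
    have hfint : Integrable f ℙ := by
      refine aux_integrable8 hfmeas (C := (n:ℝ)) (hZbdd.mono fun ω h => ?_)
      simp only [hf_def]
      by_cases hc : (∑ j ∈ Finset.range n, Y j ω) ≤ ∑ i ∈ Finset.range n, X i ω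
      · simpa [hc] using h
      · simp [hc]
    have hZval : (∫ ω, Z ω) = (n:ℝ) * (μv - μc) := by
      simp only [hZ_def]
      rw [integral_sub (integrable_finset_sum _ fun i _ => hXint i)
        (integrable_finset_sum _ fun j _ => hYint j),
        integral_finset_sum _ fun i _ => (hXint i),
        integral_finset_sum _ fun j _ => (hYint j)]
      simp only [hμv, hμc, Finset.sum_const, Finset.card_range, nsmul_eq_mul]
      ring
    refine ⟨?_, ?_, ?_⟩
    · -- lower bound: Z ≤ f pointwise
      rw [← hZval]
      refine integral_mono hZint hfint fun ω => ?_
      show Z ω ≤ Z ω *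
        (if (∑ j ∈ Finset.range n, Y j ω) ≤ ∑ i ∈ Finset.range n, X i ω then 1 else 0)
      by_cases hc : (∑ j ∈ Finset.range n, Y j ω) ≤ ∑ i ∈ Finset.range n, X i ω
      · rw [if_pos hc, mul_one]
      · push_neg at hc
        rw [if_neg hc.not_ge, mul_zero]
        simp only [hZ_def]
        linarith
    · -- upper bound via Chernoff
      set p : ℝ := (ℙ {ω | 0 ≤ (∑ j ∈ Finset.range n, Y j ω) -
        ∑ i ∈ Finset.range n, X i ω}).toReal with hp_def
      set s : Set Ω := {ω | 0 ≤ (∑ j ∈ Finset.range n, Y j ω) -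
        ∑ i ∈ Finset.range n, X i ω} with hs_def
      have hsmeas : MeasurableSet s := measurableSet_le measurable_const
        ((Finset.measurable_sum _ fun j _ => hY j).sub (Finset.measurable_sum _ fun i _ => hX i))
      set g : Ω → ℝ := fun ω => Z ω + (n:ℝ) * s.indicator (fun _ => (1:ℝ)) ω with hg_def
      have hgint : Integrable g ℙ :=
        hZint.add (((integrable_const (1:ℝ)).indicator hsmeas).const_mul _)
      have hfg : ∀ᵐ ω ∂ℙ, f ω ≤ g ω := by
        filter_upwards [hZbdd] with ω h
        simp only [hf_def, hg_def]
        by_cases hc : (∑ j ∈ Finset.range n, Y j ω) ≤ ∑ i ∈ Finset.range n, X i ω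
        · simp only [hc, if_true, mul_one]
          have : (0:ℝ) ≤ (n:ℝ) * s.indicator (fun _ => (1:ℝ)) ω := by
            apply mul_nonneg (Nat.cast_nonneg n)
            exact Set.indicator_nonneg (fun _ _ => zero_le_one) ω
          linarith
        · push_neg at hc
          have hmem : ω ∈ s := by
            simp only [hs_def, Set.mem_setOf_eq, hZ_def]
            linarith
          simp only [hc.not_ge, if_false, mul_zero, Set.indicator_of_mem hmem, mul_one]
          have := (abs_le.1 h).1
          linarith
      have hgval : (∫ ω, g ω) = (n:ℝ) * (μv - μc) + (n:ℝ) * p := by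
        simp only [hg_def]
        rw [integral_add hZint (((integrable_const (1:ℝ)).indicator hsmeas).const_mul _),
          hZval, integral_const_mul, integral_indicator_const _ hsmeas]
        simp [hp_def, hs_def, Measure.real]
      have hchern : p ≤ Real.exp (-((n:ℝ) * δ ^ 2) / (3 * μv)) := by
        have h1 := aux_chernoff8 X Y hX hY hindep hXrange hYrange hμv hμc hlt hpos n
        refine h1.trans ?_
        rw [Real.exp_le_exp]
        have h2 := aux_key8 hlt hpos hδ
        have h3 : (n:ℝ) * (δ ^ 2 / (3 * μv)) ≤ (n:ℝ) * (Real.sqrt μv - Real.sqrt μc)^2 :=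
          mul_le_mul_of_nonneg_left h2 (Nat.cast_nonneg n)
        have h4 : -((n:ℝ) * δ ^ 2) / (3 * μv) = -((n:ℝ) * (δ ^ 2 / (3 * μv))) := by ring
        rw [h4]
        linarith
      calc (∫ ω, f ω) ≤ ∫ ω, g ω := integral_mono_ae hfint hgint hfg
        _ = (n:ℝ) * (μv - μc) + (n:ℝ) * p := hgval
        _ ≤ (n:ℝ) * (μv - μc) + (n:ℝ) * Real.exp (-((n:ℝ) * δ ^ 2) / (3 * μv)) := by
            have := mul_le_mul_of_nonneg_left hchern (Nat.cast_nonneg n)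
            linarith
    · -- nonnegativity
      refine integral_nonneg fun ω => ?_
      show (0:ℝ) ≤ Z ω *
        (if (∑ j ∈ Finset.range n, Y j ω) ≤ ∑ i ∈ Finset.range n, X i ω then 1 else 0)
      by_cases hc : (∑ j ∈ Finset.range n, Y j ω) ≤ ∑ i ∈ Finset.range n, X i ω
      · rw [if_pos hc, mul_one]
        simp only [hZ_def]
        linarith
      · rw [if_neg hc, mul_zero]
  constructor
  · -- part 1
    intro n
    obtain ⟨-, hup, -⟩ := hFB n
    have he2 : (0:ℝ) ≤ Real.exp (-((n:ℝ) * δ ^ 2) / (3 * μc)) := (Real.exp_pos _).le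
    calc (∫ ω, ((∑ i ∈ Finset.range n, X i ω) - ∑ j ∈ Finset.range n, Y j ω) *
          (if (∑ j ∈ Finset.range n, Y j ω) ≤ ∑ i ∈ Finset.range n, X i ω then 1 else 0))
        ≤ (n:ℝ) * (μv - μc) + (n:ℝ) * Real.exp (-((n:ℝ) * δ ^ 2) / (3 * μv)) := hup
      _ ≤ (n:ℝ) * (μv - μc + Real.exp (-((n:ℝ) * δ ^ 2) / (3 * μv))
            + Real.exp (-((n:ℝ) * δ ^ 2) / (3 * μc))) := by
          have hn : (0:ℝ) ≤ (n:ℝ) := Nat.cast_nonneg n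
          nlinarith [mul_nonneg hn he2]
  · -- part 2
    refine ⟨1 / (μv - μc), δ^2 / (3 * μv),
      div_pos (pow_pos hδpos 2) (by linarith), fun n => ?_⟩
    obtain ⟨hlow, hup, hnn⟩ := hFB n
    set FB : ℝ := (∫ ω, ((∑ i ∈ Finset.range n, X i ω) - ∑ j ∈ Finset.range n, Y j ω) *
      (if (∑ j ∈ Finset.range n, Y j ω) ≤ ∑ i ∈ Finset.range n, X i ω then 1 else 0))
    set E : ℝ := Real.exp (-(δ^2 / (3 * μv)) * n) with hE_def
    have hEeq : Real.exp (-((n:ℝ) * δ ^ 2) / (3 * μv)) = E := by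
      rw [hE_def]; congr 1; ring
    rw [hEeq] at hup
    set C : ℝ := 1 / (μv - μc) with hC_def
    have hCpos : 0 < C := by rw [hC_def]; exact div_pos one_pos (by linarith)
    have hEpos : 0 < E := Real.exp_pos _
    by_cases hcase : 1 - C * E ≤ 0
    · calc (1 - C * E) * FB ≤ 0 := mul_nonpos_of_nonpos_of_nonneg hcase hnn
        _ ≤ (n:ℝ) * (μv - μc) := by
            apply mul_nonneg (Nat.cast_nonneg n); linarith
    · push_neg at hcase
      have h3 : (n:ℝ) * E ≤ C * E * FB := by
        have h4 : C * E * ((n:ℝ) * (μv - μc)) ≤ C * E * FB :=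
          mul_le_mul_of_nonneg_left hlow (by positivity)
        have h5 : C * E * ((n:ℝ) * (μv - μc)) = (n:ℝ) * E * (C * (μv - μc)) := by ring
        have h6 : C * (μv - μc) = 1 := by
          rw [hC_def, div_mul_eq_mul_div, one_mul, div_self (sub_ne_zero.2 hlt.ne')]
        rw [h5, h6, mul_one] at h4
        exact h4
      rw [sub_mul, one_mul]
      linarith
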